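/- Let (A,·,∘) be a transposed Novikov-Poisson algebra and p, q ∈ A fixed elements. Define x ·_p y := p·x·y and x ∘_q y := x∘y + q·x·y. Then (A, ·_p, ∘_q) is a transposed Novikov-Poisson algebra. -/
import Mathlib


/-- For fixed p, q in a transposed Novikov-Poisson algebra,
x ·ₚ y := p·x·y and x ∘_q y := x∘y + q·x·y yield a transposed Novikov-Poisson
algebra. -/
theorem stmt11 {k A : Type*} [Field k] [AddCommGroup A] [Module k A]
    (hchar : (2:k) ≠ 0)
    (mul cir : A →ₗ[k] A →ₗ[k] A)
    (hcomm : ∀ x y : A, mul x y = mul y x)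
    (hassoc : ∀ x y z : A, mul (mul x y) z = mul x (mul y z))
    (hnov1 : ∀ x y z : A, cir (cir x y) z = cir (cir x z) y)
    (hnov2 : ∀ x y z : A, cir (cir x y) z - cir x (cir y z) = cir (cir y x) z - cir y (cir x z))
    (htnp1 : ∀ x y z : A, cir (mul x y) z = cir (mul x z) y)
    (htnp2 : ∀ x y z : A, (2:k) • mul z (cir x y) = cir (mul z x) y + cir x (mul z y))
    (p q : A)
    (mulP cirQ : A → A → A)
    (hmulP : ∀ x y : A, mulP x y = mul p (mul x y))
    (hcirQ : ∀ x y : A, cirQ x y = cir x y + mul q (mul x y)) :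
    (∀ x y : A, mulP x y = mulP y x) ∧
    (∀ x y z : A, mulP (mulP x y) z = mulP x (mulP y z)) ∧
    (∀ x y z : A, cirQ (cirQ x y) z = cirQ (cirQ x z) y) ∧
    (∀ x y z : A, cirQ (cirQ x y) z - cirQ x (cirQ y z) = cirQ (cirQ y x) z - cirQ y (cirQ x z)) ∧
    (∀ x y z : A, cirQ (mulP x y) z = cirQ (mulP x z) y) ∧
    (∀ x y z : A, (2:k) • mulP z (cirQ x y) = cirQ (mulP z x) y + cirQ x (mulP z y)) := by
  -- left commutativity of mul
  have hlc : ∀ x y z : A, mul x (mul y z) = mul y (mul x z) := by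
    intro x y z; rw [← hassoc, hcomm x y, hassoc]
  -- key lemma: z·(x∘y) = y·(x∘z)
  have hL : ∀ x y z : A, mul z (cir x y) = mul y (cir x z) := by
    intro x y z
    refine smul_right_injective A hchar ?_
    show (2:k) • mul z (cir x y) = (2:k) • mul y (cir x z)
    rw [htnp2, htnp2, htnp1 z x y, htnp1 y x z, hcomm z y]
  have hL2 : ∀ x y z : A, mul (cir x y) z = mul (cir x z) y := by
    intro x y z; rw [hcomm, hL, hcomm]
  have hL2' : ∀ x y z : A, mul (cir x y) z = mul y (cir x z) := by
    intro x y z; rw [hcomm, hL]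
  have hT1 : ∀ a x y z : A, cir (mul a (mul x y)) z = cir (mul a (mul x z)) y := by
    intro a x y z; rw [← hassoc, htnp1, hassoc]
  have hAC : ∀ a x y z : A, mul (mul a (mul x y)) z = mul (mul a (mul x z)) y := by
    intro a x y z; simp only [hassoc, hlc, hcomm]
  have hAC2 : ∀ x y z : A, mul (mul q (mul x y)) z = mul x (mul q (mul y z)) := by
    intro x y z; simp only [hassoc, hlc, hcomm]
  -- x∘(q·(y·z)) = 2 q·(y·(x∘z)) - (q·(y·x))∘z
  have hX : ∀ x y z : A, cir x (mul q (mul y z)) =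
      (2:k) • mul q (mul y (cir x z)) - cir (mul q (mul y x)) z := by
    intro x y z
    have h := htnp2 x z (mul q y)
    rw [hassoc q y (cir x z), hassoc q y x, hassoc q y z] at h
    linear_combination (norm := module) -h
  refine ⟨?_, ?_, ?_, ?_, ?_, ?_⟩
  · intro x y; rw [hmulP, hmulP, hcomm x y]
  · intro x y z
    simp only [hmulP]
    simp only [hassoc, hlc, hcomm]
  · intro x y z
    simp only [hcirQ, map_add, LinearMap.add_apply]
    linear_combination (norm := module) hnov1 x y z + hT1 q x y z
      + congrArg (fun t => mul q t) (hL2 x y z)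
      + congrArg (fun t => mul q t) (hAC q x y z)
  · intro x y z
    simp only [hcirQ, map_add, LinearMap.add_apply]
    linear_combination (norm := module) hnov2 x y z - hX x y z + hX y x z
      + congrArg (fun t => mul q t) (hL2' x y z)
      - congrArg (fun t => mul q t) (hL2' y x z)
      + congrArg (fun t => mul q t) (hAC2 x y z)
      - congrArg (fun t => mul q t) (hAC2 y x z)
  · intro x y z
    simp only [hcirQ, hmulP]
    rw [hT1 p x y z, hAC p x y z]
  · intro x y z
    simp only [hcirQ, hmulP, map_add]
    have G1 := htnp2 x y (mul p z)
    have a1 : mul p (mul z (cir x y)) = mul (mul p z) (cir x y) := (hassoc p z (cir x y)).symm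
    have a2 : cir (mul (mul p z) x) y = cir (mul p (mul z x)) y :=
      congrArg (fun t => cir t y) (hassoc p z x)
    have a3 : cir x (mul (mul p z) y) = cir x (mul p (mul z y)) :=
      congrArg (fun t => cir x t) (hassoc p z y)
    have b1 : mul p (mul z (mul q (mul x y))) = mul q (mul (mul p (mul z x)) y) := by
      simp only [hassoc, hlc, hcomm]
    have b2 : mul p (mul z (mul q (mul x y))) = mul q (mul x (mul p (mul z y))) := by
      simp only [hassoc, hlc, hcomm]
    linear_combination (norm := module) G1 + (2:k) • a1 + a2 + a3 + b1 + b2
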